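/- On the linear subspace of vectors Q ∈ ℝ^d whose terminal components satisfy Q_N(i,a) = 0 for all (i,a), the origin is the unique solution of h_∞(Q) = 0: h_∞(0) = 0, and if Q satisfies Q_N(i,a) = 0 for all (i,a) and h_∞(Q) = 0, then Q = 0. -/
import Mathlib


open Finset

noncomputable section

/-- The limiting finite-horizon Q-learning vector field `h_∞`. -/
def hinf {S A : Type*} [Fintype S] [Fintype A] [Nonempty A] (N : ℕ)
    (p : ℕ → S → A → S → ℝ)
    (Q : Fin (N + 1) × S × A → ℝ) : Fin (N + 1) × S × A → ℝ :=
  fun x =>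
    if h : (x.1 : ℕ) < N then
      (∑ j, p x.1 x.2.1 x.2.2 j * ⨅ b : A, Q (⟨(x.1 : ℕ) + 1, by omega⟩, j, b))
        - Q x
    else 0

/-- on the linear subspace of vectors whose terminal components vanish,
the origin is the unique zero of `h_∞`. -/
theorem origin_unique_equilibrium_hinf {S A : Type*} [Fintype S] [Nonempty S]
    [Fintype A] [Nonempty A]
    (N : ℕ) (hN : 1 ≤ N)
    (p : ℕ → S → A → S → ℝ)
    (hp0 : ∀ n < N, ∀ i a j, 0 ≤ p n i a j)
    (hp1 : ∀ n < N, ∀ i a, ∑ j, p n i a j = 1) :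
    hinf N p 0 = 0 ∧
      ∀ Q : Fin (N + 1) × S × A → ℝ,
        (∀ (i : S) (a : A), Q (Fin.last N, i, a) = 0) →
        hinf N p Q = 0 → Q = 0 := by
  constructor
  · funext x
    simp only [hinf, Pi.zero_apply]
    split_ifs with h
    · simp [ciInf_const]
    · rfl
  · intro Q hterm hQ
    have key : ∀ k, k ≤ N → ∀ i a, Q (⟨N - k, by omega⟩, i, a) = 0 := by
      intro k
      induction k with
      | zero =>
        intro _ i a
        have : (⟨N - 0, by omega⟩ : Fin (N + 1)) = Fin.last N := by
          ext; simp
        rw [this]; exact hterm i a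
      | succ k ih =>
        intro hk i a
        have hk' : k ≤ N := by omega
        have hlt : N - (k + 1) < N := by omega
        have h0 := congrFun hQ (⟨N - (k + 1), by omega⟩, i, a)
        simp only [hinf, Pi.zero_apply] at h0
        rw [dif_pos hlt] at h0
        have hinner : ∀ j : S, (⨅ b : A,
            Q (⟨N - (k + 1) + 1, by omega⟩, j, b)) = 0 := by
          intro j
          have : ∀ b : A, Q (⟨N - (k + 1) + 1, by omega⟩, j, b) = 0 := by
            intro b
            have he : (⟨N - (k + 1) + 1, by omega⟩ : Fin (N + 1)) =
                ⟨N - k, by omega⟩ := by ext; simp; omega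
            rw [he]; exact ih hk' j b
          simp [this, ciInf_const]
        rw [Finset.sum_congr rfl (fun j _ => by rw [hinner j])] at h0
        simp at h0
        linarith
    funext x
    obtain ⟨⟨n, hn⟩, i, a⟩ := x
    have hn' : n ≤ N := by omega
    have : (⟨n, hn⟩ : Fin (N + 1)) = ⟨N - (N - n), by omega⟩ := by
      ext; simp; omega
    rw [this]
    simpa using key (N - n) (by omega) i a

end
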